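/- Let D be a finite-dimensional real inner product space, B : D → D a skew-symmetric invertible linear operator, and φ : D → D a linear operator with φ² = -I preserving the inner product, such that Bφ + φB = 0. Then dim D is divisible by 4. -/

import Mathlib

open scoped RealInnerProductSpace

lemma aux_even_finrank_of_alt {V : Type*} [AddCommGroup V] [Module ℂ V]
    [FiniteDimensional ℂ V] (H : LinearMap.BilinForm ℂ V)
    (halt : ∀ x y, H x y = -H y x) (hnd : H.Nondegenerate) :
    Even (Module.finrank ℂ V) := by
  classical
  let b := Module.finBasis ℂ V
  let M := LinearMap.BilinForm.toMatrix b H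
  have hdet : M.det ≠ 0 := (LinearMap.BilinForm.nondegenerate_iff_det_ne_zero b).mp hnd
  have hMt : M.transpose = -M := by
    ext i j
    simp only [Matrix.transpose_apply, Matrix.neg_apply, M, LinearMap.BilinForm.toMatrix_apply]
    exact halt (b j) (b i)
  rcases Nat.even_or_odd (Module.finrank ℂ V) with h | h
  · exact h
  · exfalso
    have hMM : M.det = -M.det := by
      conv_lhs => rw [← Matrix.det_transpose, hMt, Matrix.det_neg]
      simp [Fintype.card_fin, h.neg_one_pow]
    exact hdet (by linear_combination hMM / 2)

theorem stmt5 {D : Type*} [NormedAddCommGroup D] [InnerProductSpace ℝ D]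
    [FiniteDimensional ℝ D] (B φ : D →ₗ[ℝ] D)
    (hφ2 : ∀ X, φ (φ X) = -X)
    (hφg : ∀ X Y : D, ⟪φ X, φ Y⟫ = ⟪X, Y⟫)
    (hBskew : ∀ X Y : D, ⟪B X, Y⟫ = -⟪X, B Y⟫)
    (hBbij : Function.Bijective B)
    (hBφ : ∀ X, B (φ X) = -φ (B X)) :
    Module.finrank ℝ D % 4 = 0 := by
  classical
  -- basic identities
  have hφskew : ∀ a b : D, ⟪φ a, b⟫ = -⟪a, φ b⟫ := by
    intro a b
    have h := hφg a (φ b)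
    rw [hφ2 b, inner_neg_right] at h
    linarith
  have hωskew : ∀ x y : D, ⟪B x, y⟫ = -⟪B y, x⟫ := by
    intro x y; rw [hBskew, real_inner_comm]
  have hω2 : ∀ x y : D, ⟪B (φ x), φ y⟫ = -⟪B x, y⟫ := by
    intro x y; rw [hBφ, inner_neg_left, hφg]
  have hω3 : ∀ x y : D, ⟪B x, φ y⟫ = ⟪B (φ x), y⟫ := by
    intro x y
    rw [hBφ, inner_neg_left]
    linarith [hφskew (B x) y]
  -- complex module structure on D via φ
  letI sC : SMul ℂ D := ⟨fun z x => z.re • x + z.im • φ x⟩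
  have hsmul : ∀ (z : ℂ) (x : D), z • x = z.re • x + z.im • φ x := fun _ _ => rfl
  letI mC : Module ℂ D := Module.ofMinimalAxioms
    (fun r x y => by simp only [hsmul, smul_add, map_add]; abel)
    (fun r s x => by
      simp only [hsmul, Complex.add_re, Complex.add_im, add_smul]; abel)
    (fun r s x => by
      simp only [hsmul, Complex.mul_re, Complex.mul_im, map_add, map_smul, hφ2,
        sub_smul, add_smul, smul_smul, smul_neg, smul_add]
      abel)
    (fun x => by simp [hsmul])
  letI : IsScalarTower ℝ ℂ D := ⟨fun r z x => by
    simp only [hsmul, Complex.smul_re, Complex.smul_im, smul_eq_mul, mul_smul, smul_add]⟩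
  haveI : FiniteDimensional ℂ D := FiniteDimensional.right ℝ ℂ D
  -- the complex bilinear form
  have hre : ∀ a b : ℝ, ((a : ℂ) + (b : ℂ) * Complex.I).re = a := by intro a b; simp
  have him : ∀ a b : ℝ, ((a : ℂ) + (b : ℂ) * Complex.I).im = b := by intro a b; simp
  let H : LinearMap.BilinForm ℂ D :=
  { toFun := fun x =>
    { toFun := fun y => (⟪B (φ x), y⟫ : ℂ) + (⟪B x, y⟫ : ℂ) * Complex.I
      map_add' := fun y z => by
        simp only [inner_add_right]
        push_cast
        ring
      map_smul' := fun z y => by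
        simp only [RingHom.id_apply, smul_eq_mul, hsmul z y, inner_add_right,
          real_inner_smul_right]
        apply Complex.ext
        · simp only [hre, Complex.mul_re, Complex.add_re, Complex.add_im, Complex.mul_im,
            Complex.ofReal_re, Complex.ofReal_im, Complex.I_re, Complex.I_im]
          linear_combination z.im * hω2 x y
        · simp only [him, Complex.mul_im, Complex.add_re, Complex.add_im, Complex.mul_re,
            Complex.ofReal_re, Complex.ofReal_im, Complex.I_re, Complex.I_im]
          linear_combination z.im * hω3 x y }
    map_add' := fun x y => by
      apply LinearMap.ext; intro w
      simp only [LinearMap.coe_mk, AddHom.coe_mk, LinearMap.add_apply, map_add,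
        inner_add_left]
      push_cast
      ring
    map_smul' := fun z x => by
      apply LinearMap.ext; intro w
      simp only [LinearMap.coe_mk, AddHom.coe_mk, RingHom.id_apply, LinearMap.smul_apply,
        smul_eq_mul, hsmul z x, map_add, map_smul, map_neg, hφ2, inner_add_left,
        real_inner_smul_left, inner_neg_left]
      apply Complex.ext
      · simp only [hre, Complex.mul_re, Complex.add_re, Complex.add_im, Complex.mul_im,
          Complex.ofReal_re, Complex.ofReal_im, Complex.I_re, Complex.I_im]
        push_cast
        ring_nf
      · simp only [him, Complex.mul_im, Complex.add_re, Complex.add_im, Complex.mul_re,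
          Complex.ofReal_re, Complex.ofReal_im, Complex.I_re, Complex.I_im]
        push_cast
        ring_nf }
  have halt : ∀ x y, H x y = -H y x := by
    intro x y
    show (⟪B (φ x), y⟫ : ℂ) + (⟪B x, y⟫ : ℂ) * Complex.I
      = -((⟪B (φ y), x⟫ : ℂ) + (⟪B y, x⟫ : ℂ) * Complex.I)
    have h1 : ⟪B (φ y), x⟫ = -⟪B (φ x), y⟫ := by
      linarith [hωskew (φ y) x, hω3 x y]
    have h2 : ⟪B y, x⟫ = -⟪B x, y⟫ := hωskew y x
    rw [h1, h2]
    push_cast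
    ring
  have hnd : H.Nondegenerate := by
    refine (LinearMap.IsRefl.nondegenerate_iff_separatingLeft (fun x y h => by rw [halt, h, neg_zero])).mpr ?_
    intro x hx
    have him0 : ∀ y, ⟪B x, y⟫ = 0 := by
      intro y
      have h0 : ((⟪B (φ x), y⟫ : ℂ) + (⟪B x, y⟫ : ℂ) * Complex.I) = 0 := hx y
      have := congrArg Complex.im h0
      simpa [him] using this
    have hBx : B x = 0 := by
      have := him0 (B x)
      rwa [inner_self_eq_zero] at this
    exact hBbij.injective (by rw [hBx, map_zero])
  have key := aux_even_finrank_of_alt H halt hnd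
  have ht : Module.finrank ℝ ℂ * Module.finrank ℂ D = Module.finrank ℝ D :=
    Module.finrank_mul_finrank ℝ ℂ D
  rw [Complex.finrank_real_complex] at ht
  obtain ⟨k, hk⟩ := key
  omega
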